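/- Fix k ≥ 1 and let K be the abstract simplicial complex on vertex set {1, 2, …, 2k+1} (with the natural order) whose simplices are all nonempty subsets of the k sets m_i = ({1, …, k+1} \ {i}) ∪ {k+1+i} for 1 ≤ i ≤ k. Then the left quotients w_s⁻¹L_K, where for each subset s ⊆ {1, …, k} the word w_s is the strictly increasing list of the elements of s, are pairwise distinct over the 2^k subsets s. Consequently, every deterministic finite automaton over the alphabet {1, …, 2k+1} accepting L_K has at least 2^k states. -/

import Mathlib

/-- The maximal simplex `m_i = ({1, …, k+1} \ {i}) ∪ {k+1+i}`. -/
def mSimplex (k i : ℕ) : Finset ℕ :=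
  ((Finset.Icc 1 (k + 1)).erase i) ∪ {k + 1 + i}

/-- The simplicial complex on `{1, …, 2k+1}` whose simplices are all nonempty
subsets of the sets `m_i`, `1 ≤ i ≤ k`. -/
def exampleComplex (k : ℕ) : Set (Finset ℕ) :=
  {σ | σ.Nonempty ∧ ∃ i ∈ Finset.Icc 1 k, σ ⊆ mSimplex k i}

/-- The language of a simplicial complex `K`: the empty list together with all
strictly increasing lists whose set of entries is a simplex of `K`. -/
def langOf (K : Set (Finset ℕ)) : Set (List ℕ) :=
  {[]} ∪ {l | l.Pairwise (· < ·) ∧ l.toFinset ∈ K}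

/-- The left quotient `u⁻¹L = {w | u ++ w ∈ L}`. -/
def leftQuot {V : Type*} (L : Set (List V)) (u : List V) : Set (List V) :=
  {w | u ++ w ∈ L}

lemma key (k : ℕ) (s : Finset ℕ) (hs : s ⊆ Finset.Icc 1 k)
    (i : ℕ) (hi : i ∈ Finset.Icc 1 k) :
    (s.sort (· ≤ ·)) ++ [k+1, k+1+i] ∈ langOf (exampleComplex k) ↔ i ∉ s := by
  obtain ⟨hi1, hik⟩ := Finset.mem_Icc.mp hi
  constructor
  · rintro (h | ⟨hsort, hmem⟩)
    · simp at h
    · obtain ⟨-, j, hj, hsub⟩ := hmem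
      have hki : k+1+i ∈ (s.sort (· ≤ ·) ++ [k+1, k+1+i]).toFinset := by simp
      have h1 := hsub hki
      simp only [mSimplex, Finset.mem_union, Finset.mem_erase, Finset.mem_Icc,
        Finset.mem_singleton] at h1
      have hj' : j = i := by omega
      intro his
      have h2 : i ∈ (s.sort (· ≤ ·) ++ [k+1, k+1+i]).toFinset := by simp [his]
      have h3 := hsub h2
      subst hj'
      simp only [mSimplex, Finset.mem_union, Finset.mem_erase, Finset.mem_Icc,
        Finset.mem_singleton] at h3
      omega
  · intro his
    right
    have hbd : ∀ x ∈ s.sort (· ≤ ·), x ≤ k := by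
      intro x hx
      have := hs ((Finset.mem_sort (α := ℕ) (· ≤ ·)).mp hx)
      exact (Finset.mem_Icc.mp this).2
    constructor
    · rw [List.pairwise_append]
      refine ⟨(Finset.sortedLT_sort s).pairwise, by simp; omega, ?_⟩
      intro x hx y hy
      have := hbd x hx
      simp at hy
      omega
    · refine ⟨⟨k+1, by simp⟩, i, hi, ?_⟩
      have hmem : ∀ x, (x ∈ s ∨ x = k+1 ∨ x = k+1+i) → x ∈ mSimplex k i := by
        intro x hx
        simp only [mSimplex, Finset.mem_union, Finset.mem_erase, Finset.mem_Icc,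
          Finset.mem_singleton]
        rcases hx with hx | hx | hx
        · have h4 := Finset.mem_Icc.mp (hs hx)
          have : x ≠ i := fun h => his (h ▸ hx)
          omega
        · omega
        · omega
      intro x hx
      simp at hx
      apply hmem; tauto

theorem stmt8 (k : ℕ) (hk : 1 ≤ k) :
    (∀ s t : Finset ℕ, s ⊆ Finset.Icc 1 k → t ⊆ Finset.Icc 1 k →
        leftQuot (langOf (exampleComplex k)) (s.sort (· ≤ ·)) =
          leftQuot (langOf (exampleComplex k)) (t.sort (· ≤ ·)) → s = t) ∧
    (∀ (Q : Type) [Fintype Q] (M : DFA ℕ Q),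
        (∀ w : List ℕ, w ∈ M.accepts ↔ w ∈ langOf (exampleComplex k)) →
          2 ^ k ≤ Fintype.card Q) := by
  have main : ∀ s t : Finset ℕ, s ⊆ Finset.Icc 1 k → t ⊆ Finset.Icc 1 k →
      leftQuot (langOf (exampleComplex k)) (s.sort (· ≤ ·)) =
        leftQuot (langOf (exampleComplex k)) (t.sort (· ≤ ·)) → s = t := by
    intro s t hs ht hq
    ext i
    by_cases hi : i ∈ Finset.Icc 1 k
    · have h1 : [k+1, k+1+i] ∈ leftQuot (langOf (exampleComplex k)) (s.sort (· ≤ ·)) ↔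
          [k+1, k+1+i] ∈ leftQuot (langOf (exampleComplex k)) (t.sort (· ≤ ·)) := by
        rw [hq]
      simp only [leftQuot, Set.mem_setOf_eq] at h1
      rw [key k s hs i hi, key k t ht i hi] at h1
      tauto
    · constructor
      · intro h; exact absurd (hs h) hi
      · intro h; exact absurd (ht h) hi
  refine ⟨main, ?_⟩
  intro Q _ M hM
  have hinj : ∀ s ∈ (Finset.Icc 1 k).powerset, ∀ t ∈ (Finset.Icc 1 k).powerset,
      M.eval (s.sort (· ≤ ·)) = M.eval (t.sort (· ≤ ·)) → s = t := by
    intro s hsm t htm heq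
    have hsm' : s ⊆ Finset.Icc 1 k := Finset.mem_powerset.mp hsm
    have htm' : t ⊆ Finset.Icc 1 k := Finset.mem_powerset.mp htm
    refine main s t hsm' htm' ?_
    ext w
    have h1 : ∀ u : List ℕ, u ++ w ∈ langOf (exampleComplex k) ↔
        M.evalFrom (M.eval u) w ∈ M.accept := by
      intro u
      rw [← hM, DFA.mem_accepts]
      exact Iff.of_eq (congrArg (· ∈ M.accept) (M.evalFrom_of_append M.start u w))
    simp only [leftQuot, Set.mem_setOf_eq, h1, heq]
  calc 2 ^ k = (Finset.Icc 1 k).powerset.card := by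
        rw [Finset.card_powerset, Nat.card_Icc]; norm_num
    _ ≤ Finset.univ.card :=
        Finset.card_le_card_of_injOn (fun s => M.eval (s.sort (· ≤ ·)))
          (fun a _ => Finset.mem_univ _) hinj
    _ = Fintype.card Q := rfl
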